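/- Let A be an N×N Hermitian complex matrix with eigenvalues (counted with multiplicity, in nondecreasing order) a₁ ≤ a₂ ≤ … ≤ a_N, and let k be an integer with 1 ≤ k ≤ N. Then the rank-k numerical range Λ_k(A) equals the closed real interval [a_k, a_{N−k+1}] regarded as a subset of ℂ; in particular it is a non-degenerate closed interval if a_k < a_{N−k+1}, the singleton {a_k} if a_k = a_{N−k+1}, and empty if a_k > a_{N−k+1}. -/

import Mathlib

open Matrix Complex

/-- The rank-k numerical range of a square complex matrix `T`:
all `λ ∈ ℂ` such that `P T P = λ P` for some orthogonal projection `P` of rank `k`. -/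
def rankKRange {n : Type*} [Fintype n] [DecidableEq n]
    (k : ℕ) (T : Matrix n n ℂ) : Set ℂ :=
  {lam : ℂ | ∃ P : Matrix n n ℂ,
    P.IsHermitian ∧ P * P = P ∧ P.rank = k ∧ P * T * P = lam • P}

noncomputable section

lemma mem_rankKRange_conj {n : Type*} [Fintype n] [DecidableEq n] (k : ℕ)
    (T U : Matrix n n ℂ) (hU : U ∈ Matrix.unitaryGroup n ℂ) {lam : ℂ}
    (h : lam ∈ rankKRange k T) : lam ∈ rankKRange k (U * T * Uᴴ) := by
  obtain ⟨P, hP1, hP2, hP3, hP4⟩ := h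
  have hU1 : U * Uᴴ = 1 := by
    simpa [Matrix.star_eq_conjTranspose] using (Matrix.mem_unitaryGroup_iff.mp hU)
  have hU2 : Uᴴ * U = 1 := by
    simpa [Matrix.star_eq_conjTranspose] using (Matrix.mem_unitaryGroup_iff'.mp hU)
  have hdetU : IsUnit U.det := by
    apply Matrix.isUnit_det_of_right_inverse hU1
  have hdetUc : IsUnit Uᴴ.det := by
    apply Matrix.isUnit_det_of_right_inverse hU2
  refine ⟨U * P * Uᴴ, ?_, ?_, ?_, ?_⟩
  · unfold Matrix.IsHermitian at *
    simp [Matrix.conjTranspose_mul, hP1, Matrix.mul_assoc]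
  · calc U * P * Uᴴ * (U * P * Uᴴ) = U * (P * (Uᴴ * U) * P) * Uᴴ := by
          noncomm_ring
    _ = U * P * Uᴴ := by rw [hU2]; simp [hP2, Matrix.mul_assoc]
  · rw [Matrix.rank_mul_eq_left_of_isUnit_det Uᴴ _ hdetUc,
      Matrix.rank_mul_eq_right_of_isUnit_det U _ hdetU, hP3]
  · calc U * P * Uᴴ * (U * T * Uᴴ) * (U * P * Uᴴ)
        = U * (P * (Uᴴ * U) * T * (Uᴴ * U) * P) * Uᴴ := by noncomm_ring
    _ = U * (P * T * P) * Uᴴ := by rw [hU2]; noncomm_ring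
    _ = lam • (U * P * Uᴴ) := by rw [hP4]; simp [Matrix.mul_smul, Matrix.smul_mul]

lemma exists_mem_range_zero_on (N k m : ℕ) (hmk : m < k)
    (P : Matrix (Fin N) (Fin N) ℂ) (hIdem : P * P = P) (hRank : P.rank = k)
    (g : Fin m → Fin N) :
    ∃ x : Fin N → ℂ, x ≠ 0 ∧ P *ᵥ x = x ∧ ∀ j, x (g j) = 0 := by
  set S := LinearMap.range P.mulVecLin with hS
  have hSk : Module.finrank ℂ S = k := hRank
  set φ := LinearMap.funLeft ℂ ℂ g with hφ
  set T := LinearMap.ker φ with hT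
  have hrange : Module.finrank ℂ (LinearMap.range φ) ≤ m := by
    simpa using (LinearMap.range φ).finrank_le
  have hrn : Module.finrank ℂ (LinearMap.range φ) + Module.finrank ℂ T = N := by
    rw [LinearMap.finrank_range_add_finrank_ker]
    simp
  have hTfin : Module.finrank ℂ T ≥ N - m := by omega
  have hsup : Module.finrank ℂ ↥(S ⊔ T) ≤ N := by
    have := (S ⊔ T).finrank_le
    simpa using this
  have hinf : 0 < Module.finrank ℂ ↥(S ⊓ T) := by
    have := Submodule.finrank_sup_add_finrank_inf_eq S T
    omega
  have : Nontrivial ↥(S ⊓ T) := Module.finrank_pos_iff.mp hinf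
  obtain ⟨⟨x, hxmem⟩, hxne⟩ := exists_ne (0 : ↥(S ⊓ T))
  refine ⟨x, ?_, ?_, ?_⟩
  · intro h0
    apply hxne
    ext : 1
    simpa using h0
  · obtain ⟨y, hy⟩ := hxmem.1
    have : (P * P).mulVecLin y = P.mulVecLin (P.mulVecLin y) := by
      rw [Matrix.mulVecLin_mul]; rfl
    rw [hIdem] at this
    calc P *ᵥ x = P.mulVecLin x := rfl
    _ = P.mulVecLin (P.mulVecLin y) := by rw [hy]
    _ = P.mulVecLin y := this.symm
    _ = x := hy
  · intro j
    have h2 : φ x = 0 := hxmem.2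
    have := congrFun h2 j
    simpa [φ, LinearMap.funLeft] using this

lemma dot_diag_eq (N : ℕ) (a : Fin N → ℝ) (x : Fin N → ℂ) :
    star x ⬝ᵥ ((Matrix.diagonal (fun i => (a i : ℂ))) *ᵥ x)
      = ((∑ l, a l * Complex.normSq (x l) : ℝ) : ℂ) := by
  rw [dotProduct]
  push_cast
  refine Finset.sum_congr rfl fun l _ => ?_
  rw [Matrix.mulVec_diagonal]
  rw [← Complex.mul_conj]
  simp [Pi.star_apply]
  ring

lemma dot_self_eq (N : ℕ) (x : Fin N → ℂ) :
    star x ⬝ᵥ x = ((∑ l, Complex.normSq (x l) : ℝ) : ℂ) := by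
  rw [dotProduct]
  push_cast
  refine Finset.sum_congr rfl fun l _ => ?_
  rw [← Complex.mul_conj]
  simp [Pi.star_apply]
  ring

lemma rayleigh (N : ℕ) (a : Fin N → ℝ) (P : Matrix (Fin N) (Fin N) ℂ)
    (hHerm : P.IsHermitian) (lam : ℂ)
    (hEq : P * Matrix.diagonal (fun i => (a i : ℂ)) * P = lam • P)
    (x : Fin N → ℂ) (hx : P *ᵥ x = x) :
    ((∑ l, a l * Complex.normSq (x l) : ℝ) : ℂ)
      = lam * ((∑ l, Complex.normSq (x l) : ℝ) : ℂ) := by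
  set D := Matrix.diagonal (fun i => (a i : ℂ)) with hD
  have h1 : (P * D * P) *ᵥ x = lam • (P *ᵥ x) := by
    rw [hEq, Matrix.smul_mulVec]
  rw [← Matrix.mulVec_mulVec, ← Matrix.mulVec_mulVec, hx] at h1
  have h2 : star x ⬝ᵥ (P *ᵥ (D *ᵥ x)) = lam * (star x ⬝ᵥ x) := by
    rw [h1]; simp [dotProduct_smul]
  have h3 : star x ᵥ* P = star x := by
    rw [← hHerm.eq, ← Matrix.star_mulVec, hx]
  rw [Matrix.dotProduct_mulVec, h3] at h2
  rw [← dot_diag_eq N a x, ← dot_self_eq N x]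
  exact h2

def iot (N k : ℕ) (hkN : k ≤ N) (j : Fin k) : Fin N :=
  ⟨j, by have := j.isLt; omega⟩

def kap (N k : ℕ) (hk1 : 1 ≤ k) (hkN : k ≤ N) (j : Fin k) : Fin N :=
  ⟨N - 1 - j, by have := j.isLt; omega⟩

def tco (N k : ℕ) (hk1 : 1 ≤ k) (hkN : k ≤ N) (a : Fin N → ℝ) (lam : ℝ) (j : Fin k) : ℝ :=
  if a (iot N k hkN j) = a (kap N k hk1 hkN j) then 0
  else (lam - a (iot N k hkN j)) / (a (kap N k hk1 hkN j) - a (iot N k hkN j))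

def Wmat (N k : ℕ) (hk1 : 1 ≤ k) (hkN : k ≤ N) (a : Fin N → ℝ) (lam : ℝ) :
    Matrix (Fin N) (Fin k) ℂ := fun l j =>
  if l = iot N k hkN j then ((Real.sqrt (1 - tco N k hk1 hkN a lam j) : ℝ) : ℂ)
  else if l = kap N k hk1 hkN j then ((Real.sqrt (tco N k hk1 hkN a lam j) : ℝ) : ℂ)
  else 0

lemma a_iot_le (N k : ℕ) (hk1 : 1 ≤ k) (hkN : k ≤ N) (a : Fin N → ℝ) (ha : Monotone a)
    (lam : ℝ) (hlo : a ⟨k - 1, (by omega : k - 1 < N + 0)⟩ ≤ lam) (j : Fin k) :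
    a (iot N k hkN j) ≤ lam := by
  refine le_trans (ha ?_) hlo
  simp only [iot, Fin.le_def]
  have := j.isLt; omega

lemma le_a_kap (N k : ℕ) (hk1 : 1 ≤ k) (hkN : k ≤ N) (a : Fin N → ℝ) (ha : Monotone a)
    (lam : ℝ) (hhi : lam ≤ a ⟨N - k, (by omega : N - k < N + 0)⟩) (j : Fin k) :
    lam ≤ a (kap N k hk1 hkN j) := by
  refine le_trans hhi (ha ?_)
  simp only [kap, Fin.le_def]
  have := j.isLt; omega

lemma tco_mem (N k : ℕ) (hk1 : 1 ≤ k) (hkN : k ≤ N) (a : Fin N → ℝ) (ha : Monotone a)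
    (lam : ℝ) (hlo : a ⟨k - 1, (by omega : k - 1 < N + 0)⟩ ≤ lam) (hhi : lam ≤ a ⟨N - k, (by omega : N - k < N + 0)⟩) (j : Fin k) :
    0 ≤ tco N k hk1 hkN a lam j ∧ tco N k hk1 hkN a lam j ≤ 1 := by
  have h1 := a_iot_le N k hk1 hkN a ha lam hlo j
  have h2 := le_a_kap N k hk1 hkN a ha lam hhi j
  unfold tco
  split_ifs with h
  · norm_num
  · have hlt : a (iot N k hkN j) < a (kap N k hk1 hkN j) := lt_of_le_of_ne (le_trans h1 h2) h
    constructor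
    · apply div_nonneg (by linarith) (by linarith)
    · rw [div_le_one (by linarith)]; linarith

lemma tco_lam (N k : ℕ) (hk1 : 1 ≤ k) (hkN : k ≤ N) (a : Fin N → ℝ) (ha : Monotone a)
    (lam : ℝ) (hlo : a ⟨k - 1, (by omega : k - 1 < N + 0)⟩ ≤ lam) (hhi : lam ≤ a ⟨N - k, (by omega : N - k < N + 0)⟩) (j : Fin k) :
    (1 - tco N k hk1 hkN a lam j) * a (iot N k hkN j)
      + tco N k hk1 hkN a lam j * a (kap N k hk1 hkN j) = lam := by
  have h1 := a_iot_le N k hk1 hkN a ha lam hlo j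
  have h2 := le_a_kap N k hk1 hkN a ha lam hhi j
  unfold tco
  split_ifs with h
  · rw [← h] at h2 ⊢; linarith
  · have hlt : a (iot N k hkN j) < a (kap N k hk1 hkN j) := lt_of_le_of_ne (le_trans h1 h2) h
    have hne : a (kap N k hk1 hkN j) - a (iot N k hkN j) ≠ 0 := by linarith
    field_simp
    ring

lemma tco_mid (N k : ℕ) (hk1 : 1 ≤ k) (hkN : k ≤ N) (a : Fin N → ℝ) (ha : Monotone a)
    (lam : ℝ) (hlo : a ⟨k - 1, (by omega : k - 1 < N + 0)⟩ ≤ lam) (hhi : lam ≤ a ⟨N - k, (by omega : N - k < N + 0)⟩) (j : Fin k)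
    (hmid : N ≤ (j : ℕ) + k) : tco N k hk1 hkN a lam j = 0 := by
  have hj := j.isLt
  have e1 : a (iot N k hkN j) = lam := by
    refine le_antisymm (a_iot_le N k hk1 hkN a ha lam hlo j) ?_
    refine le_trans hhi (ha ?_)
    simp only [iot, Fin.le_def]; omega
  have e2 : a (kap N k hk1 hkN j) = lam := by
    refine le_antisymm ?_ (le_a_kap N k hk1 hkN a ha lam hhi j)
    refine le_trans (ha ?_) hlo
    simp only [kap, Fin.le_def]; omega
  unfold tco
  rw [if_pos (by rw [e1, e2])]

lemma iot_inj (N k : ℕ) (hkN : k ≤ N) {i j : Fin k}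
    (h : iot N k hkN i = iot N k hkN j) : i = j := by
  have := congrArg Fin.val h
  simp only [iot] at this
  exact Fin.ext this

lemma kap_inj (N k : ℕ) (hk1 : 1 ≤ k) (hkN : k ≤ N) {i j : Fin k}
    (h : kap N k hk1 hkN i = kap N k hk1 hkN j) : i = j := by
  have := congrArg Fin.val h
  simp only [kap] at this
  have hi := i.isLt; have hj := j.isLt
  exact Fin.ext (by omega)

lemma iot_eq_kap (N k : ℕ) (hk1 : 1 ≤ k) (hkN : k ≤ N) {i j : Fin k}
    (h : iot N k hkN i = kap N k hk1 hkN j) :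
    N ≤ (i : ℕ) + k ∧ N ≤ (j : ℕ) + k := by
  have := congrArg Fin.val h
  simp only [iot, kap] at this
  have hi := i.isLt; have hj := j.isLt
  omega

lemma Wmat_key (N k : ℕ) (hk1 : 1 ≤ k) (hkN : k ≤ N) (a : Fin N → ℝ) (ha : Monotone a)
    (lam : ℝ) (hlo : a ⟨k - 1, (by omega : k - 1 < N + 0)⟩ ≤ lam) (hhi : lam ≤ a ⟨N - k, (by omega : N - k < N + 0)⟩)
    (d : Fin N → ℂ) :
    (Wmat N k hk1 hkN a lam)ᴴ * (Matrix.diagonal d * Wmat N k hk1 hkN a lam) =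
      Matrix.diagonal (fun j => ((1 - tco N k hk1 hkN a lam j : ℝ) : ℂ) * d (iot N k hkN j)
        + ((tco N k hk1 hkN a lam j : ℝ) : ℂ) * d (kap N k hk1 hkN j)) := by
  ext i j
  rw [Matrix.mul_apply]
  simp only [Matrix.conjTranspose_apply, Matrix.diagonal_mul]
  rcases eq_or_ne i j with rfl | hij
  · rw [Matrix.diagonal_apply_eq]
    rcases eq_or_ne (iot N k hkN i) (kap N k hk1 hkN i) with heq | hne
    · have hmid : N ≤ (i : ℕ) + k := (iot_eq_kap N k hk1 hkN heq).1
      have ht : tco N k hk1 hkN a lam i = 0 := tco_mid N k hk1 hkN a ha lam hlo hhi i hmid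
      rw [← Finset.sum_subset (Finset.subset_univ {iot N k hkN i})
        (fun l _ hl => by
          simp only [Finset.mem_singleton] at hl
          have hl2 : l ≠ kap N k hk1 hkN i := by rw [← heq]; exact hl
          simp [Wmat, hl, hl2])]
      rw [Finset.sum_singleton]
      simp [Wmat, ht, ← heq]
    · rw [← Finset.sum_subset (Finset.subset_univ {iot N k hkN i, kap N k hk1 hkN i})
        (fun l _ hl => by
          simp only [Finset.mem_insert, Finset.mem_singleton, not_or] at hl
          simp [Wmat, hl.1, hl.2])]
      rw [Finset.sum_pair hne]
      have e0 := tco_mem N k hk1 hkN a ha lam hlo hhi i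
      have e1 : ((Real.sqrt (1 - tco N k hk1 hkN a lam i) : ℝ) : ℂ)
          * ((Real.sqrt (1 - tco N k hk1 hkN a lam i) : ℝ) : ℂ)
          = ((1 - tco N k hk1 hkN a lam i : ℝ) : ℂ) := by
        rw [← Complex.ofReal_mul, Real.mul_self_sqrt (by linarith [e0.2])]
      have e2 : ((Real.sqrt (tco N k hk1 hkN a lam i) : ℝ) : ℂ)
          * ((Real.sqrt (tco N k hk1 hkN a lam i) : ℝ) : ℂ)
          = ((tco N k hk1 hkN a lam i : ℝ) : ℂ) := by
        rw [← Complex.ofReal_mul, Real.mul_self_sqrt e0.1]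
      have w1 : Wmat N k hk1 hkN a lam (iot N k hkN i) i
          = ((Real.sqrt (1 - tco N k hk1 hkN a lam i) : ℝ) : ℂ) := by
        simp [Wmat]
      have w2 : Wmat N k hk1 hkN a lam (kap N k hk1 hkN i) i
          = ((Real.sqrt (tco N k hk1 hkN a lam i) : ℝ) : ℂ) := by
        simp [Wmat, hne.symm]
      rw [w1, w2]
      simp only [RCLike.star_def, Complex.conj_ofReal]
      linear_combination d (iot N k hkN i) * e1 + d (kap N k hk1 hkN i) * e2
  · rw [Matrix.diagonal_apply_ne _ hij]
    apply Finset.sum_eq_zero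
    intro l _
    by_cases h1 : l = iot N k hkN j
    · subst h1
      have hni : iot N k hkN j ≠ iot N k hkN i := fun hc => hij (iot_inj N k hkN hc).symm
      by_cases h3 : iot N k hkN j = kap N k hk1 hkN i
      · have := tco_mid N k hk1 hkN a ha lam hlo hhi i (iot_eq_kap N k hk1 hkN h3).2
        have h7 : kap N k hk1 hkN i ≠ iot N k hkN i := fun hc => hni (h3.trans hc)
        simp [Wmat, hni, h3, h7, this]
      · simp [Wmat, hni, h3]
    · by_cases h4 : l = kap N k hk1 hkN j
      · subst h4
        by_cases h5 : kap N k hk1 hkN j = iot N k hkN i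
        · have := tco_mid N k hk1 hkN a ha lam hlo hhi j (iot_eq_kap N k hk1 hkN h5.symm).2
          simp [Wmat, h1, this]
        · by_cases h6 : kap N k hk1 hkN j = kap N k hk1 hkN i
          · exact absurd (kap_inj N k hk1 hkN h6).symm hij
          · simp [Wmat, h5, h6]
      · simp [Wmat, h1, h4]



lemma diag_mem (N k : ℕ) (hk1 : 1 ≤ k) (hkN : k ≤ N) (a : Fin N → ℝ) (ha : Monotone a)
    (lam : ℝ) (hlo : a ⟨k - 1, (by omega : k - 1 < N + 0)⟩ ≤ lam) (hhi : lam ≤ a ⟨N - k, (by omega : N - k < N + 0)⟩) :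
    (lam : ℂ) ∈ rankKRange k (Matrix.diagonal (fun i => (a i : ℂ))) := by
  set W := Wmat N k hk1 hkN a lam with hWdef
  set D := Matrix.diagonal (fun i => (a i : ℂ)) with hDdef
  have hWW : Wᴴ * W = 1 := by
    have h1 := Wmat_key N k hk1 hkN a ha lam hlo hhi (fun _ => 1)
    rw [Matrix.diagonal_one, Matrix.one_mul] at h1
    rw [h1, ← Matrix.diagonal_one]
    congr 1
    funext j
    push_cast
    ring
  have hWD : Wᴴ * (D * W) = (lam : ℂ) • 1 := by
    rw [hDdef, Wmat_key N k hk1 hkN a ha lam hlo hhi (fun i => (a i : ℂ))]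
    have : ∀ j : Fin k, ((1 - tco N k hk1 hkN a lam j : ℝ) : ℂ) * ((a (iot N k hkN j) : ℝ) : ℂ)
        + ((tco N k hk1 hkN a lam j : ℝ) : ℂ) * ((a (kap N k hk1 hkN j) : ℝ) : ℂ) = (lam : ℂ) := by
      intro j
      have := tco_lam N k hk1 hkN a ha lam hlo hhi j
      push_cast
      exact_mod_cast congrArg (Complex.ofReal) this
    rw [show (fun j : Fin k => ((1 - tco N k hk1 hkN a lam j : ℝ) : ℂ) * (fun i => (a i : ℂ)) (iot N k hkN j)
        + ((tco N k hk1 hkN a lam j : ℝ) : ℂ) * (fun i => (a i : ℂ)) (kap N k hk1 hkN j))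
        = fun _ : Fin k => (lam : ℂ) from funext fun j => this j]
    rw [show (fun _ : Fin k => (lam : ℂ)) = (lam : ℂ) • (fun _ : Fin k => (1 : ℂ)) by
      funext j; simp]
    rw [Matrix.diagonal_smul, Matrix.diagonal_one]
  refine ⟨W * Wᴴ, ?_, ?_, ?_, ?_⟩
  · exact Matrix.isHermitian_mul_conjTranspose_self W
  · rw [Matrix.mul_assoc W Wᴴ (W * Wᴴ), ← Matrix.mul_assoc Wᴴ W Wᴴ, hWW, Matrix.one_mul]
  · refine le_antisymm ?_ ?_
    · exact le_trans (Matrix.rank_mul_le_left W Wᴴ)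
        (le_trans (Matrix.rank_le_card_width W) (by simp))
    · have hX : Wᴴ * ((W * Wᴴ) * W) = 1 := by
        rw [Matrix.mul_assoc W Wᴴ W, hWW, Matrix.mul_one, hWW]
      calc k = (1 : Matrix (Fin k) (Fin k) ℂ).rank := by
              rw [Matrix.rank_one]; simp
      _ = (Wᴴ * ((W * Wᴴ) * W)).rank := by rw [hX]
      _ ≤ ((W * Wᴴ) * W).rank := Matrix.rank_mul_le_right _ _
      _ ≤ (W * Wᴴ).rank := Matrix.rank_mul_le_left _ _
  · have hassoc : W * Wᴴ * D * (W * Wᴴ) = W * (Wᴴ * (D * W)) * Wᴴ := by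
      simp only [Matrix.mul_assoc]
    rw [hassoc, hWD, Matrix.mul_smul, Matrix.mul_one, Matrix.smul_mul]

lemma sum_normSq_pos (N : ℕ) (x : Fin N → ℂ) (hx : x ≠ 0) :
    0 < ∑ l, Complex.normSq (x l) := by
  obtain ⟨l0, hl0⟩ := Function.ne_iff.mp hx
  refine Finset.sum_pos' (fun i _ => Complex.normSq_nonneg _) ⟨l0, Finset.mem_univ _, ?_⟩
  simpa [Complex.normSq_pos] using hl0

lemma diag_subset (N k : ℕ) (hk1 : 1 ≤ k) (hkN : k ≤ N)
    (a : Fin N → ℝ) (ha : Monotone a) {lam : ℂ}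
    (h : lam ∈ rankKRange k (Matrix.diagonal (fun i => (a i : ℂ)))) :
    ∃ r : ℝ, r ∈ Set.Icc (a ⟨k - 1, (by omega : k - 1 < N + 0)⟩) (a ⟨N - k, (by omega : N - k < N + 0)⟩) ∧ (r : ℂ) = lam := by
  obtain ⟨P, hHerm, hIdem, hRank, hEq⟩ := h
  -- upper bound vector
  obtain ⟨x, hx0, hxP, hxz⟩ := exists_mem_range_zero_on N k (k-1) (by omega) P hIdem hRank
    (fun j => ⟨N - k + 1 + (j : ℕ), by omega⟩)
  have hxzero : ∀ l : Fin N, N - k < (l : ℕ) → x l = 0 := by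
    intro l hl
    have hlt : (l : ℕ) - (N - k + 1) < k - 1 := by omega
    have : l = (⟨N - k + 1 + ((l : ℕ) - (N - k + 1)), by omega⟩ : Fin N) := by
      apply Fin.ext; simp; omega
    rw [this]
    exact hxz ⟨(l : ℕ) - (N - k + 1), hlt⟩
  set s := ∑ l, Complex.normSq (x l) with hs
  set R := ∑ l, a l * Complex.normSq (x l) with hRdef
  have hspos : 0 < s := sum_normSq_pos N x hx0
  have hR : (R : ℂ) = lam * (s : ℂ) := rayleigh N a P hHerm lam hEq x hxP
  have hlam : lam = ((R / s : ℝ) : ℂ) := by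
    have hs0 : (s : ℂ) ≠ 0 := by exact_mod_cast hspos.ne'
    rw [Complex.ofReal_div, eq_div_iff hs0, hR]
  have hRle : R ≤ a ⟨N - k, (by omega : N - k < N + 0)⟩ * s := by
    rw [hRdef, hs, Finset.mul_sum]
    refine Finset.sum_le_sum fun l _ => ?_
    by_cases hxl : x l = 0
    · simp [hxl]
    · have hlle : (l : ℕ) ≤ N - k := by
        by_contra hcon
        exact hxl (hxzero l (by omega))
      have : a l ≤ a ⟨N - k, (by omega : N - k < N + 0)⟩ := ha (by simpa [Fin.le_def] using hlle)
      exact mul_le_mul_of_nonneg_right this (Complex.normSq_nonneg _)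
  have hup : R / s ≤ a ⟨N - k, (by omega : N - k < N + 0)⟩ := by
    rw [div_le_iff₀ hspos]; exact hRle
  -- lower bound vector
  obtain ⟨y, hy0, hyP, hyz⟩ := exists_mem_range_zero_on N k (k-1) (by omega) P hIdem hRank
    (fun j => ⟨(j : ℕ), by omega⟩)
  have hyzero : ∀ l : Fin N, (l : ℕ) < k - 1 → y l = 0 := by
    intro l hl
    have : l = (⟨(l : ℕ), l.isLt⟩ : Fin N) := by apply Fin.ext; simp
    rw [this]
    exact hyz ⟨(l : ℕ), hl⟩
  set s' := ∑ l, Complex.normSq (y l) with hs'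
  set R' := ∑ l, a l * Complex.normSq (y l) with hR'def
  have hs'pos : 0 < s' := sum_normSq_pos N y hy0
  have hR' : (R' : ℂ) = lam * (s' : ℂ) := rayleigh N a P hHerm lam hEq y hyP
  have hR'real : R' = (R / s) * s' := by
    have : ((R' : ℝ) : ℂ) = (((R / s) * s' : ℝ) : ℂ) := by
      rw [hR', hlam]; push_cast; ring
    exact_mod_cast this
  have hR'ge : a ⟨k - 1, (by omega : k - 1 < N + 0)⟩ * s' ≤ R' := by
    rw [hR'def, hs', Finset.mul_sum]
    refine Finset.sum_le_sum fun l _ => ?_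
    by_cases hyl : y l = 0
    · simp [hyl]
    · have hlge : k - 1 ≤ (l : ℕ) := by
        by_contra hcon
        exact hyl (hyzero l (by omega))
      have : a ⟨k - 1, (by omega : k - 1 < N + 0)⟩ ≤ a l := ha (by simpa [Fin.le_def] using hlge)
      exact mul_le_mul_of_nonneg_right this (Complex.normSq_nonneg _)
  have hlo : a ⟨k - 1, (by omega : k - 1 < N + 0)⟩ ≤ R / s := by
    have := hR'ge
    rw [hR'real] at this
    exact le_of_mul_le_mul_right this hs'pos
  exact ⟨R / s, ⟨hlo, hup⟩, hlam.symm⟩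

/-- for Hermitian A with nondecreasing eigenvalues a₁ ≤ … ≤ a_N,
Λ_k(A) = [a_k, a_{N−k+1}] (as a subset of ℂ). -/
theorem rankKRange_hermitian_eq_Icc (N k : ℕ) (hk1 : 1 ≤ k) (hkN : k ≤ N)
    (A : Matrix (Fin N) (Fin N) ℂ) (hA : A.IsHermitian)
    (a : Fin N → ℝ) (ha : Monotone a)
    (U : Matrix (Fin N) (Fin N) ℂ) (hU : U ∈ Matrix.unitaryGroup (Fin N) ℂ)
    (hdiag : A = U * Matrix.diagonal (fun i => (a i : ℂ)) * Uᴴ) :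
    rankKRange k A =
      (fun x : ℝ => (x : ℂ)) ''
        Set.Icc (a ⟨k - 1, by omega⟩) (a ⟨N - k, by omega⟩) := by
  have hU' : Uᴴ ∈ Matrix.unitaryGroup (Fin N) ℂ := by
    rw [← Matrix.star_eq_conjTranspose]
    exact Unitary.star_mem hU
  have hU2 : Uᴴ * U = 1 := by
    simpa [Matrix.star_eq_conjTranspose] using (Matrix.mem_unitaryGroup_iff'.mp hU)
  have hU1 : U * Uᴴ = 1 := by
    simpa [Matrix.star_eq_conjTranspose] using (Matrix.mem_unitaryGroup_iff.mp hU)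
  set D := Matrix.diagonal (fun i => (a i : ℂ)) with hD
  rw [hdiag]
  ext lam
  constructor
  · intro h
    have h2 := mem_rankKRange_conj k (U * D * Uᴴ) Uᴴ hU' h
    have h3 : Uᴴ * (U * D * Uᴴ) * Uᴴᴴ = D := by
      rw [Matrix.conjTranspose_conjTranspose]
      calc Uᴴ * (U * D * Uᴴ) * U = (Uᴴ * U) * D * (Uᴴ * U) := by
            simp only [Matrix.mul_assoc]
      _ = D := by rw [hU2]; simp
    rw [h3] at h2
    obtain ⟨r, hr, hre⟩ := diag_subset N k hk1 hkN a ha h2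
    exact ⟨r, hr, hre⟩
  · rintro ⟨r, hr, rfl⟩
    exact mem_rankKRange_conj k D U hU (diag_mem N k hk1 hkN a ha r hr.1 hr.2)

end
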